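/- Let x, y ∈ V with x ≠ y, and let f ∈ Lip_w^1(V) satisfy ⟨f, δ_x − δ_y⟩ = d(x,y). Then κ̄(x,y) ≤ ⟨𝓛⁰f, δ_x − δ_y⟩ / d(x,y); in particular κ̄(x,y) < ∞. -/

import Mathlib

open scoped BigOperators

noncomputable section

namespace HypRicci

variable {V : Type*} [Fintype V] [DecidableEq V]

/-- A finite weighted hypergraph on vertex set `V`: a finite set of nonempty
hyperedges together with positive weights. -/
structure Hypergraph (V : Type*) [Fintype V] [DecidableEq V] : Type _ where
  E : Finset (Finset V)
  w : Finset V → ℝ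
  w_pos : ∀ e ∈ E, 0 < w e
  e_nonempty : ∀ e ∈ E, e.Nonempty

/-- Degree `d_x = ∑_{e ∋ x} w(e)`. -/
def deg (H : Hypergraph V) (x : V) : ℝ := ∑ e ∈ H.E, if x ∈ e then H.w e else 0

/-- Volume `vol(V) = ∑_x d_x`. -/
def vol (H : Hypergraph V) : ℝ := ∑ x, deg H x

/-- Weighted inner product `⟨f,g⟩ = ∑_x f(x) g(x) / d_x`. -/
def inn (H : Hypergraph V) (f g : V → ℝ) : ℝ := ∑ x, f x * g x / deg H x

/-- Norm associated to `inn`. -/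
def nrm (H : Hypergraph V) (f : V → ℝ) : ℝ := Real.sqrt (inn H f f)

/-- Indicator function `δ_x`. -/
def delta (x : V) : V → ℝ := fun z => if z = x then 1 else 0

/-- Standard (unweighted) dot product `u^⊤ v`. -/
def dot (u v : V → ℝ) : ℝ := ∑ x, u x * v x

/-- Base polytope `B_e = conv{δ_x − δ_y : x,y ∈ e}`. -/
def Bp (e : Finset V) : Set (V → ℝ) :=
  convexHull ℝ {b : V → ℝ | ∃ x ∈ e, ∃ y ∈ e, b = delta x - delta y}

/-- The multivalued hypergraph Laplacian
`L(f) = {∑_e w(e) (b_e^⊤ f) b_e : b_e ∈ argmax_{b ∈ B_e} b^⊤ f}`. -/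
def Lap (H : Hypergraph V) (f : V → ℝ) : Set (V → ℝ) :=
  { g | ∃ b : Finset V → (V → ℝ),
      (∀ e ∈ H.E, b e ∈ Bp e ∧ ∀ b' ∈ Bp e, dot b' f ≤ dot (b e) f) ∧
      g = ∑ e ∈ H.E, (H.w e * dot (b e) f) • b e }

/-- `D⁻¹ f`. -/
def Dinv (H : Hypergraph V) (f : V → ℝ) : V → ℝ := fun x => f x / deg H x

/-- Normalized Laplacian `𝓛(f) = L(D⁻¹ f)`. -/
def NL (H : Hypergraph V) (f : V → ℝ) : Set (V → ℝ) := Lap H (Dinv H f)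

/-- The resolvent `J_λ = (I + λ𝓛)⁻¹`: it sends `f` to the (unique) `g` with
`f ∈ g + λ 𝓛(g)`. -/
def Resolvent (H : Hypergraph V) (l : ℝ) (f : V → ℝ) : V → ℝ :=
  Classical.epsilon fun g => ∃ h ∈ NL H g, f = g + l • h

/-- Adjacency: `x ∼ y` iff some hyperedge contains both. -/
def Adj (H : Hypergraph V) (x y : V) : Prop := ∃ e ∈ H.E, x ∈ e ∧ y ∈ e

/-- There is a chain of length `n` of successively adjacent vertices from `x` to `y`. -/
def chainProp (H : Hypergraph V) (x y : V) (n : ℕ) : Prop :=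
  ∃ z : ℕ → V, z 0 = x ∧ z n = y ∧ ∀ i < n, Adj H (z i) (z (i + 1))

/-- Connectedness of the hypergraph. -/
def Connected (H : Hypergraph V) : Prop := ∀ x y : V, ∃ n, chainProp H x y n

/-- Graph distance (as a natural number). -/
def hdistN (H : Hypergraph V) (x y : V) : ℕ := sInf {n | chainProp H x y n}

/-- Graph distance `d(x,y)` as a real number. -/
def gdist (H : Hypergraph V) (x y : V) : ℝ := (hdistN H x y : ℝ)

/-- Diameter `diam(H) = max_{x,y} d(x,y)`. -/
def hdiam (H : Hypergraph V) : ℝ :=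
  (((Finset.univ : Finset (V × V)).sup fun p => hdistN H p.1 p.2 : ℕ) : ℝ)

/-- Weighted `1`-Lipschitz functions: `⟨f, δ_x − δ_y⟩ ≤ d(x,y)` for all `x, y`. -/
def Lip1 (H : Hypergraph V) : Set (V → ℝ) :=
  { f | ∀ x y : V, inn H f (delta x - delta y) ≤ gdist H x y }

/-- The `λ`-nonlinear Kantorovich difference. -/
def KD (H : Hypergraph V) (l : ℝ) (x y : V) : ℝ :=
  sSup { r | ∃ f ∈ Lip1 H, r = inn H (Resolvent H l f) (delta x - delta y) }

/-- `κ_λ(x,y) = 1 − KD_λ(x,y)/d(x,y)`. -/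
def kappa (H : Hypergraph V) (l : ℝ) (x y : V) : ℝ := 1 - KD H l x y / gdist H x y

/-- Lower coarse Ricci curvature `κ̲(x,y) = liminf_{λ↓0} κ_λ(x,y)/λ`. -/
def kappaLower (H : Hypergraph V) (x y : V) : EReal :=
  Filter.liminf (fun l : ℝ => ((kappa H l x y / l : ℝ) : EReal)) (nhdsWithin 0 (Set.Ioi 0))

/-- Upper coarse Ricci curvature `κ̄(x,y) = limsup_{λ↓0} κ_λ(x,y)/λ`. -/
def kappaUpper (H : Hypergraph V) (x y : V) : EReal :=
  Filter.limsup (fun l : ℝ => ((kappa H l x y / l : ℝ) : EReal)) (nhdsWithin 0 (Set.Ioi 0))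

/-- Canonical restriction `𝓛⁰ f`: the unique element of minimal norm of `𝓛(f)`. -/
def L0 (H : Hypergraph V) (f : V → ℝ) : V → ℝ :=
  Classical.epsilon fun g => g ∈ NL H f ∧ ∀ h ∈ NL H f, nrm H g ≤ nrm H h

/-- The stationary distribution `π(x) = d_x / vol(V)`. -/
def piH (H : Hypergraph V) : V → ℝ := fun x => deg H x / vol H

/-- The energy `Q(h) = (1/2) ∑_e w(e) max_{x,y ∈ e} (h(x) − h(y))²`. -/
def Qform (H : Hypergraph V) (h : V → ℝ) : ℝ :=
  (1 / 2) * ∑ e ∈ H.E, H.w e * sSup { r | ∃ x ∈ e, ∃ y ∈ e, r = (h x - h y) ^ 2 }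


section Aux
set_option linter.unusedSectionVars false

open Finset

variable {H : Hypergraph V}

lemma dot_comm (u v : V → ℝ) : dot u v = dot v u := by
  unfold dot; exact Finset.sum_congr rfl (fun x _ => mul_comm _ _)

lemma dot_add_left (u v w : V → ℝ) : dot (u + v) w = dot u w + dot v w := by
  unfold dot; rw [← Finset.sum_add_distrib]; exact Finset.sum_congr rfl (fun x _ => by
    simp [add_mul])

lemma dot_smul_left (c : ℝ) (u w : V → ℝ) : dot (c • u) w = c * dot u w := by
  unfold dot; rw [Finset.mul_sum]; exact Finset.sum_congr rfl (fun x _ => by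
    simp [mul_assoc])

lemma dot_sub_left (u v w : V → ℝ) : dot (u - v) w = dot u w - dot v w := by
  unfold dot; rw [← Finset.sum_sub_distrib]; exact Finset.sum_congr rfl (fun x _ => by
    simp [sub_mul])

lemma dot_zero_left (w : V → ℝ) : dot (0 : V → ℝ) w = 0 := by simp [dot]

lemma dot_sum_left {ι : Type*} (s : Finset ι) (u : ι → V → ℝ) (w : V → ℝ) :
    dot (∑ i ∈ s, u i) w = ∑ i ∈ s, dot (u i) w := by
  classical
  induction s using Finset.induction_on with
  | empty => simp [dot]
  | insert a s' hni ih =>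
                     rw [Finset.sum_insert hni, Finset.sum_insert hni, dot_add_left, ih]

lemma dot_delta_left (x : V) (v : V → ℝ) : dot (delta x) v = v x := by
  unfold dot delta
  rw [Finset.sum_eq_single x] <;> simp +contextual

lemma dot_delta_sub (x y : V) (v : V → ℝ) : dot (delta x - delta y) v = v x - v y := by
  rw [dot_sub_left, dot_delta_left, dot_delta_left]

lemma Dinv_add (f g : V → ℝ) : Dinv H (f + g) = Dinv H f + Dinv H g := by
  funext z; simp [Dinv, add_div]

lemma Dinv_sub (f g : V → ℝ) : Dinv H (f - g) = Dinv H f - Dinv H g := by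
  funext z; simp [Dinv, sub_div]

lemma Dinv_smul (c : ℝ) (f : V → ℝ) : Dinv H (c • f) = c • Dinv H f := by
  funext z; simp [Dinv, mul_div_assoc]

lemma inn_eq_dot (f g : V → ℝ) : inn H f g = dot f (Dinv H g) := by
  unfold inn dot Dinv; exact Finset.sum_congr rfl (fun x _ => mul_div_assoc _ _ _)

lemma inn_symm (f g : V → ℝ) : inn H f g = inn H g f := by
  unfold inn; exact Finset.sum_congr rfl (fun x _ => by ring)

lemma inn_add_left (f g h : V → ℝ) : inn H (f + g) h = inn H f h + inn H g h := by
  simp only [inn_eq_dot]; exact dot_add_left _ _ _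

lemma inn_sub_left (f g h : V → ℝ) : inn H (f - g) h = inn H f h - inn H g h := by
  simp only [inn_eq_dot]; exact dot_sub_left _ _ _

lemma inn_smul_left (c : ℝ) (f h : V → ℝ) : inn H (c • f) h = c * inn H f h := by
  simp only [inn_eq_dot]; exact dot_smul_left _ _ _

lemma inn_smul_right (c : ℝ) (f h : V → ℝ) : inn H f (c • h) = c * inn H f h := by
  rw [inn_symm, inn_smul_left, inn_symm]

lemma inn_add_right (f g h : V → ℝ) : inn H f (g + h) = inn H f g + inn H f h := by
  rw [inn_symm, inn_add_left, inn_symm g, inn_symm h]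

lemma inn_sub_right (f g h : V → ℝ) : inn H f (g - h) = inn H f g - inn H f h := by
  rw [inn_symm, inn_sub_left, inn_symm g, inn_symm h]

lemma inn_self_nonneg (hdeg : ∀ x, 0 < deg H x) (f : V → ℝ) : 0 ≤ inn H f f := by
  unfold inn
  exact Finset.sum_nonneg fun x _ => div_nonneg (mul_self_nonneg _) (hdeg x).le

lemma inn_self_eq_zero (hdeg : ∀ x, 0 < deg H x) {f : V → ℝ} (h : inn H f f = 0) : f = 0 := by
  funext z
  have hterm : ∀ x ∈ Finset.univ (α := V), 0 ≤ f x * f x / deg H x :=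
    fun x _ => div_nonneg (mul_self_nonneg _) (hdeg x).le
  have := (Finset.sum_eq_zero_iff_of_nonneg hterm).1 h z (Finset.mem_univ z)
  have hz : f z * f z = 0 := by
    have := (div_eq_zero_iff.1 this)
    rcases this with h' | h'
    · exact h'
    · exact absurd h' (hdeg z).ne'
  simpa [mul_self_eq_zero] using hz

lemma nrm_nonneg (f : V → ℝ) : 0 ≤ nrm H f := Real.sqrt_nonneg _

lemma sq_nrm (hdeg : ∀ x, 0 < deg H x) (f : V → ℝ) : nrm H f ^ 2 = inn H f f := by
  unfold nrm; rw [Real.sq_sqrt (inn_self_nonneg hdeg f)]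

/-- Cauchy–Schwarz for `inn`. -/
lemma inn_le_nrm_mul_nrm (hdeg : ∀ x, 0 < deg H x) (f g : V → ℝ) :
    inn H f g ≤ nrm H f * nrm H g := by
  have key : ∀ u v : V → ℝ, inn H u v = ∑ x, (u x / Real.sqrt (deg H x)) * (v x / Real.sqrt (deg H x)) := by
    intro u v
    unfold inn
    refine Finset.sum_congr rfl (fun x _ => ?_)
    rw [div_mul_div_comm, Real.mul_self_sqrt (hdeg x).le]
  have h2 : ∀ u : V → ℝ, inn H u u = ∑ x, (u x / Real.sqrt (deg H x)) ^ 2 := by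
    intro u; rw [key]; exact Finset.sum_congr rfl (fun x _ => (sq _).symm)
  rw [key]
  unfold nrm
  rw [h2, h2]
  exact Real.sum_mul_le_sqrt_mul_sqrt _ _ _

end Aux
section Aux2
set_option linter.unusedSectionVars false

variable {H : Hypergraph V}

lemma gen_mem_Bp {e : Finset V} {x y : V} (hx : x ∈ e) (hy : y ∈ e) :
    delta x - delta y ∈ Bp e :=
  subset_convexHull ℝ _ ⟨x, hx, y, hy, rfl⟩

lemma zero_mem_Bp {e : Finset V} (he : e.Nonempty) : (0 : V → ℝ) ∈ Bp e := by
  obtain ⟨x, hx⟩ := he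
  simpa using gen_mem_Bp hx hx

lemma Bp_convex (e : Finset V) : Convex ℝ (Bp e) := convex_convexHull _ _

lemma genset_finite (e : Finset V) :
    {b : V → ℝ | ∃ x ∈ e, ∃ y ∈ e, b = delta x - delta y}.Finite := by
  apply Set.Finite.subset (Set.Finite.image (fun p : V × V => delta p.1 - delta p.2)
    (e ×ˢ e).finite_toSet)
  rintro b ⟨x, hx, y, hy, rfl⟩
  exact ⟨(x, y), by simp [Finset.mem_product, hx, hy]⟩

lemma Bp_isCompact (e : Finset V) : IsCompact (Bp e) :=
  (genset_finite e).isCompact_convexHull ℝ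

lemma Bp_isClosed (e : Finset V) : IsClosed (Bp e) :=
  (genset_finite e).isClosed_convexHull ℝ

lemma isLinearMap_dot (v : V → ℝ) : IsLinearMap ℝ (fun b : V → ℝ => dot b v) :=
  ⟨fun u u' => dot_add_left u u' v, fun c u => dot_smul_left c u v⟩

lemma dot_le_of_mem_Bp {e : Finset V} {v : V → ℝ} {c : ℝ}
    (hgen : ∀ x ∈ e, ∀ y ∈ e, v x - v y ≤ c) {b : V → ℝ} (hb : b ∈ Bp e) :
    dot b v ≤ c := by
  have := convexHull_min (t := {b : V → ℝ | dot b v ≤ c}) ?_ (convex_halfSpace_le (isLinearMap_dot v) c) hb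
  · exact this
  · rintro b' ⟨x, hx, y, hy, rfl⟩
    rw [Set.mem_setOf_eq, dot_delta_sub]
    exact hgen x hx y hy

lemma sum_delta (x : V) : ∑ z, delta x z = 1 := by
  unfold delta
  rw [Finset.sum_eq_single x] <;> simp +contextual

lemma sum_eq_zero_of_mem_Bp {e : Finset V} {b : V → ℝ} (hb : b ∈ Bp e) :
    ∑ z, b z = 0 := by
  have hlin : IsLinearMap ℝ (fun b : V → ℝ => ∑ z, b z) :=
    ⟨fun u u' => Finset.sum_add_distrib, fun c u => by
      simpa [Finset.mul_sum] using (Finset.mul_sum Finset.univ u c).symm⟩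
  have := convexHull_min (t := {b : V → ℝ | ∑ z, b z = 0}) ?_ (convex_hyperplane hlin 0) hb
  · exact this
  · rintro b' ⟨x, hx, y, hy, rfl⟩
    simp [Set.mem_setOf_eq, Finset.sum_sub_distrib, sum_delta]

lemma dot_const_of_mem_Bp {e : Finset V} {b : V → ℝ} (hb : b ∈ Bp e) (c : ℝ) :
    dot b (fun _ => c) = 0 := by
  unfold dot
  rw [← Finset.sum_mul, sum_eq_zero_of_mem_Bp hb, zero_mul]

lemma continuous_dot_right (v : V → ℝ) : Continuous (fun b : V → ℝ => dot b v) :=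
  continuous_finset_sum _ fun x _ => (continuous_apply x).mul continuous_const

/-- The edge maximum `M_e(g) = max_{b ∈ B_e} b ⬝ D⁻¹g`. -/
def MV (H : Hypergraph V) (g : V → ℝ) (e : Finset V) : ℝ :=
  sSup {r : ℝ | ∃ x ∈ e, ∃ y ∈ e, r = Dinv H g x - Dinv H g y}

lemma MV_eq_sup' {e : Finset V} (he : e.Nonempty) (g : V → ℝ) :
    MV H g e = (e ×ˢ e).sup' (he.product he)
      (fun p => Dinv H g p.1 - Dinv H g p.2) := by
  rw [Finset.sup'_eq_csSup_image (e ×ˢ e) (he.product he) (fun p => Dinv H g p.1 - Dinv H g p.2)]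
  unfold MV
  congr 1
  ext r
  constructor
  · rintro ⟨x, hx, y, hy, rfl⟩
    exact ⟨(x, y), by simp [Finset.mem_product, hx, hy]⟩
  · rintro ⟨⟨x, y⟩, hp, rfl⟩
    rw [Finset.mem_coe, Finset.mem_product] at hp
    exact ⟨x, hp.1, y, hp.2, rfl⟩

lemma exists_MV_pair {e : Finset V} (he : e.Nonempty) (g : V → ℝ) :
    ∃ x ∈ e, ∃ y ∈ e, MV H g e = Dinv H g x - Dinv H g y := by
  rw [MV_eq_sup' he]
  obtain ⟨⟨x, y⟩, hp, h⟩ := Finset.exists_mem_eq_sup' (he.product he)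
    (fun p : V × V => Dinv H g p.1 - Dinv H g p.2)
  rw [Finset.mem_product] at hp
  exact ⟨x, hp.1, y, hp.2, h⟩

lemma le_MV {e : Finset V} {x y : V} (hx : x ∈ e) (hy : y ∈ e) (g : V → ℝ) :
    Dinv H g x - Dinv H g y ≤ MV H g e := by
  rw [MV_eq_sup' ⟨x, hx⟩]
  exact Finset.le_sup' (f := fun p : V × V => Dinv H g p.1 - Dinv H g p.2) (b := (x, y)) (Finset.mem_product.2 ⟨hx, hy⟩)

lemma MV_nonneg {e : Finset V} (he : e.Nonempty) (g : V → ℝ) : 0 ≤ MV H g e := by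
  obtain ⟨x, hx⟩ := he
  simpa using le_MV hx hx g

lemma dot_le_MV {e : Finset V} {b : V → ℝ} (hb : b ∈ Bp e) (g : V → ℝ) :
    dot b (Dinv H g) ≤ MV H g e :=
  dot_le_of_mem_Bp (fun x hx y hy => le_MV hx hy g) hb

lemma maximal_dot_eq_MV {e : Finset V} (he : e.Nonempty) {b : V → ℝ} (g : V → ℝ) (hb : b ∈ Bp e)
    (hmax : ∀ b' ∈ Bp e, dot b' (Dinv H g) ≤ dot b (Dinv H g)) :
    dot b (Dinv H g) = MV H g e := by
  refine le_antisymm (dot_le_MV hb g) ?_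
  obtain ⟨x, hx, y, hy, h⟩ := exists_MV_pair he g
  rw [h, ← dot_delta_sub x y (Dinv H g)]
  exact hmax _ (gen_mem_Bp hx hy)

lemma continuous_finset_sup' {ι X : Type*} [TopologicalSpace X] {s : Finset ι}
    (hs : s.Nonempty) {F : ι → X → ℝ} (hF : ∀ i ∈ s, Continuous (F i)) :
    Continuous (fun x => s.sup' hs (fun i => F i x)) := by
  classical
  induction hs using Finset.Nonempty.cons_induction with
  | singleton a => simpa using hF a (by simp)
  | cons a s' ha hs' ih =>
      have : (fun x => (Finset.cons a s' ha).sup' (Finset.cons_nonempty ha) (fun i => F i x))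
          = fun x => max (F a x) (s'.sup' hs' (fun i => F i x)) := by
        funext x; rw [Finset.sup'_cons]
      rw [this]
      exact Continuous.max (hF a (by simp)) (ih (fun i hi => hF i (by simp [hi])))

lemma continuous_MV {e : Finset V} (he : e.Nonempty) :
    Continuous (fun g => MV H g e) := by
  have : (fun g => MV H g e) = fun g => (e ×ˢ e).sup' (he.product he)
      (fun p => Dinv H g p.1 - Dinv H g p.2) := by
    funext g; exact MV_eq_sup' he g
  rw [this]
  exact continuous_finset_sup' _ (fun p _ =>
    (((continuous_apply p.1).div_const _).sub ((continuous_apply p.2).div_const _)))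

end Aux2
section Aux4
set_option linter.unusedSectionVars false

variable {H : Hypergraph V}

lemma dot_sub_right (u v w : V → ℝ) : dot u (v - w) = dot u v - dot u w := by
  rw [dot_comm, dot_sub_left, dot_comm v u, dot_comm w u]

lemma mem_NL_iff {f h : V → ℝ} : h ∈ NL H f ↔ ∃ b : Finset V → (V → ℝ),
    (∀ e ∈ H.E, b e ∈ Bp e ∧ ∀ b' ∈ Bp e, dot b' (Dinv H f) ≤ dot (b e) (Dinv H f)) ∧
    h = ∑ e ∈ H.E, (H.w e * dot (b e) (Dinv H f)) • b e := Iff.rfl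

lemma NL_nonempty (f : V → ℝ) : (NL H f).Nonempty := by
  classical
  have hch : ∀ e, e ∈ H.E → ∃ b, b ∈ Bp e ∧ ∀ b' ∈ Bp e,
      dot b' (Dinv H f) ≤ dot b (Dinv H f) := by
    intro e he
    obtain ⟨x, hx, y, hy, h⟩ := exists_MV_pair (H.e_nonempty e he) f
    refine ⟨delta x - delta y, gen_mem_Bp hx hy, ?_⟩
    intro b' hb'
    rw [dot_delta_sub, ← h]
    exact dot_le_MV hb' f
  choose b hb using hch
  refine ⟨_, ⟨fun e => if he : e ∈ H.E then b e he else 0, fun e he => ?_, rfl⟩⟩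
  simp only [dif_pos he]
  exact hb e he

/-- Argmax set over an edge. -/
def AM (H : Hypergraph V) (f : V → ℝ) (e : Finset V) : Set (V → ℝ) :=
  {b | b ∈ Bp e ∧ ∀ b' ∈ Bp e, dot b' (Dinv H f) ≤ dot b (Dinv H f)}

def SS (H : Hypergraph V) (f : V → ℝ) : Set (Finset V → (V → ℝ)) :=
  Set.pi Set.univ (fun e => if e ∈ H.E then AM H f e else {0})

def TT (H : Hypergraph V) (f : V → ℝ) (b : Finset V → (V → ℝ)) : V → ℝ :=
  ∑ e ∈ H.E, (H.w e * MV H f e) • b e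

lemma AM_convex (f : V → ℝ) (e : Finset V) : Convex ℝ (AM H f e) := by
  rintro b1 ⟨hb1, hm1⟩ b2 ⟨hb2, hm2⟩ a c ha hc hac
  refine ⟨Bp_convex e hb1 hb2 ha hc hac, fun b' hb' => ?_⟩
  have h1 := hm1 b' hb'
  have h2 := hm2 b' hb'
  rw [dot_add_left, dot_smul_left, dot_smul_left]
  calc dot b' (Dinv H f) = a * dot b' (Dinv H f) + c * dot b' (Dinv H f) := by
        rw [← add_mul, hac, one_mul]
    _ ≤ a * dot b1 (Dinv H f) + c * dot b2 (Dinv H f) := by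
        gcongr
  
lemma AM_isClosed (f : V → ℝ) (e : Finset V) : IsClosed (AM H f e) := by
  have : AM H f e = Bp e ∩ ⋂ b' ∈ Bp e, {b | dot b' (Dinv H f) ≤ dot b (Dinv H f)} := by
    ext b; simp [AM, Set.mem_iInter]
  rw [this]
  exact (Bp_isClosed e).inter (isClosed_biInter fun b' _ =>
    isClosed_le continuous_const (continuous_dot_right _))

lemma AM_isCompact (f : V → ℝ) (e : Finset V) : IsCompact (AM H f e) :=
  (Bp_isCompact e).of_isClosed_subset (AM_isClosed f e) (fun b hb => hb.1)

lemma SS_isCompact (f : V → ℝ) : IsCompact (SS H f) := by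
  refine isCompact_univ_pi (fun e => ?_)
  by_cases he : e ∈ H.E
  · simpa [he] using AM_isCompact (H := H) f e
  · simpa [he] using isCompact_singleton (x := (0 : V → ℝ))

lemma SS_convex (f : V → ℝ) : Convex ℝ (SS H f) := by
  refine convex_pi (fun e _ => ?_)
  by_cases he : e ∈ H.E
  · simpa [he] using AM_convex (H := H) f e
  · simpa [he] using convex_singleton (0 : V → ℝ)

lemma TT_continuous (f : V → ℝ) : Continuous (TT H f) :=
  continuous_finset_sum _ fun e _ => (continuous_apply e).fun_const_smul _

lemma NL_eq_image (f : V → ℝ) : NL H f = TT H f '' SS H f := by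
  ext h
  constructor
  · rintro ⟨b, hb, rfl⟩
    classical
    refine ⟨fun e => if he : e ∈ H.E then b e else 0, fun e _ => ?_, ?_⟩
    · by_cases he : e ∈ H.E
      · simpa [he, AM] using (hb e he : _)
      · simp [he]
    · unfold TT
      refine Finset.sum_congr rfl (fun e he => ?_)
      simp only [dif_pos he]
      rw [maximal_dot_eq_MV (H.e_nonempty e he) f (hb e he).1 (hb e he).2]
  · rintro ⟨b, hb, rfl⟩
    have hb' : ∀ e ∈ H.E, b e ∈ AM H f e := by
      intro e he
      have := hb e (Set.mem_univ e)
      simpa [he] using this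
    refine ⟨b, fun e he => (hb' e he : _), ?_⟩
    unfold TT
    refine Finset.sum_congr rfl (fun e he => ?_)
    rw [maximal_dot_eq_MV (H.e_nonempty e he) f (hb' e he).1 (hb' e he).2]

lemma NL_isCompact (f : V → ℝ) : IsCompact (NL H f) := by
  rw [NL_eq_image]
  exact (SS_isCompact f).image (TT_continuous f)

lemma NL_isClosed (f : V → ℝ) : IsClosed (NL H f) := (NL_isCompact f).isClosed

lemma NL_convex (f : V → ℝ) : Convex ℝ (NL H f) := by
  rintro h1 hm1 h2 hm2 a c ha hc hac
  rw [NL_eq_image] at hm1 hm2 ⊢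
  obtain ⟨b1, hb1, rfl⟩ := hm1
  obtain ⟨b2, hb2, rfl⟩ := hm2
  refine ⟨a • b1 + c • b2, SS_convex f hb1 hb2 ha hc hac, ?_⟩
  unfold TT
  rw [Finset.smul_sum, Finset.smul_sum, ← Finset.sum_add_distrib]
  refine Finset.sum_congr rfl (fun e he => ?_)
  simp only [Pi.add_apply, Pi.smul_apply]
  rw [smul_add]
  rw [smul_comm a, smul_comm c]

end Aux4
section Aux5
set_option linter.unusedSectionVars false

variable {H : Hypergraph V}

lemma maximizer_nonneg {f : V → ℝ} {e : Finset V} (he : e ∈ H.E) {b : V → ℝ}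
    (hmax : ∀ b' ∈ Bp e, dot b' (Dinv H f) ≤ dot b (Dinv H f)) :
    0 ≤ dot b (Dinv H f) := by
  have := hmax 0 (zero_mem_Bp (H.e_nonempty e he))
  rwa [dot_zero_left] at this

/-- Monotonicity of the normalized Laplacian. -/
lemma NL_monotone {f1 f2 h1 h2 : V → ℝ} (hm1 : h1 ∈ NL H f1) (hm2 : h2 ∈ NL H f2) :
    0 ≤ inn H (h1 - h2) (f1 - f2) := by
  obtain ⟨b1, hb1, rfl⟩ := hm1
  obtain ⟨b2, hb2, rfl⟩ := hm2
  rw [inn_eq_dot, Dinv_sub, dot_sub_left, dot_sub_right, dot_sub_right]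
  have key : ∀ (b : Finset V → (V → ℝ)) (u v : V → ℝ),
      dot (∑ e ∈ H.E, (H.w e * dot (b e) (Dinv H u)) • b e) (Dinv H v)
        = ∑ e ∈ H.E, H.w e * (dot (b e) (Dinv H u) * dot (b e) (Dinv H v)) := by
    intro b u v
    rw [dot_sum_left]
    exact Finset.sum_congr rfl (fun e he => by rw [dot_smul_left]; ring)
  rw [key, key, key, key]
  have : (∑ e ∈ H.E, H.w e * (dot (b1 e) (Dinv H f1) * dot (b1 e) (Dinv H f1))
      - ∑ e ∈ H.E, H.w e * (dot (b1 e) (Dinv H f1) * dot (b1 e) (Dinv H f2)))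
      - (∑ e ∈ H.E, H.w e * (dot (b2 e) (Dinv H f2) * dot (b2 e) (Dinv H f1))
      - ∑ e ∈ H.E, H.w e * (dot (b2 e) (Dinv H f2) * dot (b2 e) (Dinv H f2)))
      = ∑ e ∈ H.E, H.w e * ((dot (b1 e) (Dinv H f1) * dot (b1 e) (Dinv H f1)
          - dot (b1 e) (Dinv H f1) * dot (b1 e) (Dinv H f2))
          + (dot (b2 e) (Dinv H f2) * dot (b2 e) (Dinv H f2)
          - dot (b2 e) (Dinv H f2) * dot (b2 e) (Dinv H f1))) := by
    rw [← Finset.sum_sub_distrib, ← Finset.sum_sub_distrib, ← Finset.sum_sub_distrib]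
    refine Finset.sum_congr rfl (fun e he => by ring)
  rw [this]
  refine Finset.sum_nonneg (fun e he => ?_)
  have ha : 0 ≤ dot (b1 e) (Dinv H f1) := maximizer_nonneg he (hb1 e he).2
  have hc : 0 ≤ dot (b2 e) (Dinv H f2) := maximizer_nonneg he (hb2 e he).2
  have ha' : dot (b1 e) (Dinv H f2) ≤ dot (b2 e) (Dinv H f2) := (hb2 e he).2 _ (hb1 e he).1
  have hc' : dot (b2 e) (Dinv H f1) ≤ dot (b1 e) (Dinv H f1) := (hb1 e he).2 _ (hb2 e he).1
  have hw : 0 ≤ H.w e := (H.w_pos e he).le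
  set a := dot (b1 e) (Dinv H f1)
  set a' := dot (b1 e) (Dinv H f2)
  set c := dot (b2 e) (Dinv H f2)
  set c' := dot (b2 e) (Dinv H f1)
  have : 0 ≤ (a * a - a * a') + (c * c - c * c') := by nlinarith [sq_nonneg (a - c)]
  exact mul_nonneg hw this

lemma continuous_inn_self : Continuous (fun g : V → ℝ => inn H g g) := by
  unfold inn
  exact continuous_finset_sum _ fun x _ =>
    (((continuous_apply x).mul (continuous_apply x)).div_const _)

lemma continuous_inn_left (v : V → ℝ) : Continuous (fun g : V → ℝ => inn H g v) := by
  have : (fun g : V → ℝ => inn H g v) = fun g => dot g (Dinv H v) := by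
    funext g; exact inn_eq_dot g v
  rw [this]
  exact continuous_dot_right _

lemma L0_spec (f : V → ℝ) :
    L0 H f ∈ NL H f ∧ ∀ h ∈ NL H f, nrm H (L0 H f) ≤ nrm H h := by
  have hex : ∃ g, g ∈ NL H f ∧ ∀ h ∈ NL H f, nrm H g ≤ nrm H h := by
    obtain ⟨g, hg, hmin⟩ := (NL_isCompact (H := H) f).exists_isMinOn (NL_nonempty f)
      continuous_inn_self.continuousOn
    exact ⟨g, hg, fun h hh => Real.sqrt_le_sqrt (hmin hh)⟩
  exact Classical.epsilon_spec hex

lemma inn_self_sub_expand (hdeg : ∀ x, 0 < deg H x) (u v : V → ℝ) :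
    inn H (u - v) (u - v) = inn H u u - 2 * inn H u v + inn H v v := by
  rw [inn_sub_left, inn_sub_right, inn_sub_right, inn_symm v u]; ring

lemma eq_L0_of_min (hdeg : ∀ x, 0 < deg H x) {f h : V → ℝ} (hm : h ∈ NL H f)
    (hle : nrm H h ≤ nrm H (L0 H f)) : h = L0 H f := by
  obtain ⟨hg, hmin⟩ := L0_spec (H := H) f
  set g := L0 H f
  have hge : nrm H g ≤ nrm H h := hmin h hm
  have heqn : nrm H h = nrm H g := le_antisymm hle hge
  have heq : inn H h h = inn H g g := by
    rw [← sq_nrm hdeg, ← sq_nrm hdeg, heqn]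
  have hmid : (1/2 : ℝ) • h + (1/2 : ℝ) • g ∈ NL H f :=
    NL_convex f hm hg (by norm_num) (by norm_num) (by norm_num)
  set m := (1/2 : ℝ) • h + (1/2 : ℝ) • g with hm_def
  have hginnm : inn H g g ≤ inn H m m := by
    have := hmin m hmid
    calc inn H g g = nrm H g ^ 2 := (sq_nrm hdeg g).symm
      _ ≤ nrm H m ^ 2 := by
          have h0 : 0 ≤ nrm H g := nrm_nonneg g
          nlinarith [this]
      _ = inn H m m := sq_nrm hdeg m
  have inn_smul_right : ∀ (c : ℝ) (u v : V → ℝ), inn H u (c • v) = c * inn H u v := by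
    intro c u v; rw [inn_symm, inn_smul_left, inn_symm]
  have hmm : inn H m m = (1/4) * (inn H h h + 2 * inn H h g + inn H g g) := by
    rw [hm_def, inn_add_left, inn_add_right, inn_add_right]
    simp only [inn_smul_left, inn_smul_right]
    rw [inn_symm g h]
    ring
  have hsub : inn H (h - g) (h - g) ≤ 0 := by
    rw [inn_self_sub_expand hdeg]
    rw [hmm] at hginnm
    linarith [hginnm, heq]
  have : h - g = 0 := inn_self_eq_zero hdeg (le_antisymm hsub (inn_self_nonneg hdeg _))
  exact sub_eq_zero.1 this

end Aux5
section Aux6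
set_option linter.unusedSectionVars false
set_option maxHeartbeats 1000000

open Filter Topology

variable {H : Hypergraph V}

lemma delta_repr (b : V → ℝ) : b = ∑ z, b z • delta z := by
  funext x
  simp only [Finset.sum_apply, Pi.smul_apply, delta, smul_eq_mul]
  rw [Finset.sum_eq_single x]
  · simp
  · intro z _ hz
    simp [if_neg (Ne.symm hz)]
  · intro h; exact absurd (Finset.mem_univ x) h

lemma phi_eq_dot (hdeg : ∀ x, 0 < deg H x) (φ : (V → ℝ) →L[ℝ] ℝ) (b : V → ℝ) :
    φ b = dot b (Dinv H (fun z => deg H z * φ (delta z))) := by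
  conv_lhs => rw [delta_repr b]
  rw [map_sum]
  unfold dot Dinv
  refine Finset.sum_congr rfl fun z _ => ?_
  rw [map_smul, smul_eq_mul, mul_div_cancel_left₀ _ (hdeg z).ne']

theorem resolvent_exists (hdeg : ∀ x, 0 < deg H x) {l : ℝ} (hl : 0 < l) (f : V → ℝ) :
    ∃ g, ∃ h ∈ NL H g, f = g + l • h := by
  classical
  set F : (V → ℝ) → ℝ := fun g => (1/2) * ∑ e ∈ H.E, H.w e * (MV H g e)^2 with hF
  set Φ : (V → ℝ) → ℝ := fun g => (1/2) * inn H (g - f) (g - f) + l * F g with hΦ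
  have hFnonneg : ∀ g, 0 ≤ F g := by
    intro g
    refine mul_nonneg (by norm_num) (Finset.sum_nonneg fun e he => ?_)
    exact mul_nonneg (H.w_pos e he).le (sq_nonneg _)
  have hΦf : Φ f = l * F f := by simp [hΦ, inn_eq_dot, dot, Dinv]
  have hΦfnonneg : 0 ≤ Φ f := by rw [hΦf]; exact mul_nonneg hl.le (hFnonneg f)
  have hΦcont : Continuous Φ := by
    refine Continuous.add (Continuous.mul continuous_const ?_) (Continuous.mul continuous_const ?_)
    · exact continuous_inn_self.comp (continuous_id.sub continuous_const)
    · exact Continuous.mul continuous_const (continuous_finset_sum _ fun e he =>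
        continuous_const.mul ((continuous_MV (H.e_nonempty e he)).pow 2))
  -- compact sublevel set
  set K : Set (V → ℝ) := {g | inn H (g - f) (g - f) ≤ 2 * Φ f} with hK
  have hfK : f ∈ K := by
    simp only [hK, Set.mem_setOf_eq, sub_self]
    have : inn H (0 : V → ℝ) 0 = 0 := by simp [inn]
    rw [this]; linarith
  have hKclosed : IsClosed K :=
    isClosed_le (continuous_inn_self.comp (continuous_id.sub continuous_const)) continuous_const
  have hKsub : K ⊆ Set.pi Set.univ (fun z =>
      Set.Icc (f z - Real.sqrt (2 * Φ f * deg H z)) (f z + Real.sqrt (2 * Φ f * deg H z))) := by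
    intro g hg z _
    have hterm : (g - f) z * (g - f) z / deg H z ≤ inn H (g - f) (g - f) := by
      unfold inn
      exact Finset.single_le_sum (f := fun x => (g - f) x * (g - f) x / deg H x)
        (fun x _ => div_nonneg (mul_self_nonneg _) (hdeg x).le) (Finset.mem_univ z)
    have hsq : (g z - f z)^2 ≤ 2 * Φ f * deg H z := by
      have h1 : (g z - f z) * (g z - f z) / deg H z ≤ 2 * Φ f := by
        have := le_trans hterm hg
        simpa [Pi.sub_apply] using this
      have := (div_le_iff₀ (hdeg z)).1 h1
      nlinarith [this]
    have habs := Real.abs_le_sqrt hsq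
    rw [abs_le] at habs
    exact ⟨by linarith [habs.1], by linarith [habs.2]⟩
  have hKcomp : IsCompact K :=
    IsCompact.of_isClosed_subset (isCompact_univ_pi fun z => isCompact_Icc) hKclosed hKsub
  obtain ⟨g, hgK, hgmin⟩ := hKcomp.exists_isMinOn ⟨f, hfK⟩ hΦcont.continuousOn
  have hmin : ∀ p, Φ g ≤ Φ p := by
    intro p
    by_cases hp : p ∈ K
    · exact hgmin hp
    · have h1 : 2 * Φ f < inn H (p - f) (p - f) := not_le.1 hp
      have h2 : Φ f < Φ p := by
        have hlF : 0 ≤ l * F p := mul_nonneg hl.le (hFnonneg p)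
        have h00 : inn H (f - f) (f - f) = 0 := by simp [inn]
        simp only [hΦ]
        nlinarith [h1, hΦf, hlF, h00, hΦ]
      exact le_trans (hgmin hfK) h2.le
  set h : V → ℝ := l⁻¹ • (f - g) with hh
  have hlh : l • h = f - g := by
    rw [hh, smul_smul, mul_inv_cancel₀ hl.ne', one_smul]
  refine ⟨g, h, ?_, by rw [hlh]; abel⟩
  by_contra hnot
  obtain ⟨φ, u, hsep, hu⟩ :=
    geometric_hahn_banach_closed_point (NL_convex (H := H) g) (NL_isClosed g) hnot
  set v : V → ℝ := fun z => deg H z * φ (delta z) with hv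
  have hφ : ∀ b : V → ℝ, φ b = dot b (Dinv H v) := fun b => phi_eq_dot hdeg φ b
  -- per-edge Danskin data
  have hedge : ∀ e ∈ H.E, ∃ x, x ∈ e ∧ ∃ y, y ∈ e ∧
      (Dinv H g x - Dinv H g y = MV H g e) ∧
      (∀ᶠ t in 𝓝[>] (0:ℝ),
        MV H (g + t • v) e ≤ MV H g e + t * (Dinv H v x - Dinv H v y)) := by
    intro e he
    have hne : e.Nonempty := H.e_nonempty e he
    have hs : (e ×ˢ e).Nonempty := hne.product hne
    set α : V × V → ℝ := fun p => Dinv H g p.1 - Dinv H g p.2 with hα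
    set β : V × V → ℝ := fun p => Dinv H v p.1 - Dinv H v p.2 with hβ
    set M0 : ℝ := (e ×ˢ e).sup' hs α with hM0
    have hMVM0 : MV H g e = M0 := MV_eq_sup' hne g
    set A := (e ×ˢ e).filter (fun p => α p = M0) with hA
    have hAne : A.Nonempty := by
      obtain ⟨p, hp, hval⟩ := Finset.exists_mem_eq_sup' hs α
      exact ⟨p, Finset.mem_filter.2 ⟨hp, hval.symm⟩⟩
    set D : ℝ := A.sup' hAne β with hD
    obtain ⟨ps, hpsA, hDps⟩ := Finset.exists_mem_eq_sup' hAne β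
    have hpsmem := Finset.mem_filter.1 hpsA
    have hps1 : ps.1 ∈ e := (Finset.mem_product.1 hpsmem.1).1
    have hps2 : ps.2 ∈ e := (Finset.mem_product.1 hpsmem.1).2
    refine ⟨ps.1, hps1, ps.2, hps2, ?_, ?_⟩
    · rw [hMVM0, ← hpsmem.2]
    · have hβps : Dinv H v ps.1 - Dinv H v ps.2 = D := by rw [hD]; exact hDps.symm
      rw [hβps]
      have hev : ∀ p ∈ e ×ˢ e, ∀ᶠ t in 𝓝[>] (0:ℝ), α p + t * β p ≤ M0 + t * D := by
        intro p hp
        by_cases hpA : α p = M0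
        · have hβD : β p ≤ D := Finset.le_sup' β (Finset.mem_filter.2 ⟨hp, hpA⟩)
          filter_upwards [self_mem_nhdsWithin] with t ht
          have : t * β p ≤ t * D := mul_le_mul_of_nonneg_left hβD (le_of_lt ht)
          linarith
        · have hlt : α p < M0 := lt_of_le_of_ne (Finset.le_sup' α hp) hpA
          have htend : Tendsto (fun t : ℝ => t * (β p - D)) (𝓝[>] (0:ℝ)) (𝓝 0) := by
            have h0 : Tendsto (fun t : ℝ => t * (β p - D)) (𝓝 (0:ℝ)) (𝓝 (0 * (β p - D))) :=
              (continuous_id.mul continuous_const).tendsto 0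
            rw [zero_mul] at h0
            exact h0.mono_left nhdsWithin_le_nhds
          have := htend.eventually_lt_const (show (0:ℝ) < M0 - α p by linarith)
          filter_upwards [this] with t ht
          nlinarith [ht]
      have hall := (Finset.eventually_all (e ×ˢ e)).2 hev
      filter_upwards [hall] with t ht
      rw [MV_eq_sup' hne, hMVM0]
      refine Finset.sup'_le _ _ (fun p hp => ?_)
      have hDinv : ∀ z, Dinv H (g + t • v) z = Dinv H g z + t * Dinv H v z := by
        intro z
        rw [Dinv_add, Dinv_smul]
        simp
      have := ht p hp
      rw [hDinv, hDinv]
      simp only [hα, hβ] at this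
      linarith
  choose xs hxs ys hys hMVeq hevent using hedge
  set bb : Finset V → (V → ℝ) :=
    fun e => if he : e ∈ H.E then delta (xs e he) - delta (ys e he) else 0 with hbb
  set Df : Finset V → ℝ :=
    fun e => if he : e ∈ H.E then Dinv H v (xs e he) - Dinv H v (ys e he) else 0 with hDf
  have hbbAM : ∀ e ∈ H.E, bb e ∈ Bp e ∧
      ∀ b' ∈ Bp e, dot b' (Dinv H g) ≤ dot (bb e) (Dinv H g) := by
    intro e he
    constructor
    · simp only [hbb, dif_pos he]
      exact gen_mem_Bp (hxs e he) (hys e he)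
    · intro b' hb'
      have : dot (bb e) (Dinv H g) = MV H g e := by
        simp only [hbb, dif_pos he]
        rw [dot_delta_sub]
        exact hMVeq e he
      rw [this]
      exact dot_le_MV hb' g
  have hbbdot : ∀ e ∈ H.E, dot (bb e) (Dinv H g) = MV H g e := by
    intro e he
    simp only [hbb, dif_pos he]
    rw [dot_delta_sub]
    exact hMVeq e he
  have hbbdotv : ∀ e ∈ H.E, dot (bb e) (Dinv H v) = Df e := by
    intro e he
    simp only [hbb, hDf, dif_pos he]
    rw [dot_delta_sub]
  set u₀ : V → ℝ := ∑ e ∈ H.E, (H.w e * dot (bb e) (Dinv H g)) • bb e with hu₀def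
  have hu₀NL : u₀ ∈ NL H g := ⟨bb, hbbAM, rfl⟩
  have hevent' : ∀ e ∈ H.E, ∀ᶠ t in 𝓝[>] (0:ℝ),
      MV H (g + t • v) e ≤ MV H g e + t * Df e := by
    intro e he
    have h0 := hevent e he
    simp only [hDf, dif_pos he]
    exact h0
  have hφu₀ : φ u₀ = ∑ e ∈ H.E, H.w e * (MV H g e * Df e) := by
    rw [hφ, hu₀def, dot_sum_left]
    refine Finset.sum_congr rfl fun e he => ?_
    rw [dot_smul_left, hbbdot e he, hbbdotv e he]
    ring
  set G : ℝ := inn H (g - f) v + l * (∑ e ∈ H.E, H.w e * (MV H g e * Df e)) with hG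
  set C : ℝ := (1/2) * inn H v v + (l/2) * (∑ e ∈ H.E, H.w e * (Df e)^2) with hC
  have hinnhv : inn H h v = φ h := by rw [hφ, inn_eq_dot]
  have hgfv : inn H (g - f) v = -(l * φ h) := by
    have : g - f = -(l • h) := by rw [hlh]; abel
    rw [this, ← hinnhv]
    have : inn H (-(l • h)) v = -(l * inn H h v) := by
      have h1 : -(l • h) = (-l) • h := by rw [neg_smul]
      rw [h1, inn_smul_left]; ring
    rw [this]
  have hGneg : G < 0 := by
    have h1 : φ u₀ < u := hsep u₀ hu₀NL
    rw [hG, hgfv, ← hφu₀]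
    nlinarith [hu, h1, hl]
  -- eventual expansion bound
  have hexp : ∀ᶠ t in 𝓝[>] (0:ℝ), 0 ≤ t * (G + t * C) := by
    have hallE := (Finset.eventually_all H.E).2 hevent'
    filter_upwards [hallE, self_mem_nhdsWithin] with t htE ht
    have htpos : (0:ℝ) < t := ht
    -- quadratic part
    have hq : inn H (g + t • v - f) (g + t • v - f)
        = inn H (g - f) (g - f) + 2 * t * inn H (g - f) v + t^2 * inn H v v := by
      have hsplit : g + t • v - f = (g - f) + t • v := by abel
      rw [hsplit]
      simp only [inn_add_left, inn_add_right, inn_smul_left, inn_smul_right]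
      rw [inn_symm v (g - f)]
      ring
    -- F part
    have hFpart : F (g + t • v) ≤ F g + t * (∑ e ∈ H.E, H.w e * (MV H g e * Df e))
        + (t^2/2) * (∑ e ∈ H.E, H.w e * (Df e)^2) := by
      rw [hF]
      have hsum : ∀ e ∈ H.E, (MV H (g + t • v) e)^2
          ≤ (MV H g e)^2 + 2 * t * (MV H g e * Df e) + t^2 * (Df e)^2 := by
        intro e he
        have hub : MV H (g + t • v) e ≤ MV H g e + t * Df e := htE e he
        have hnn : 0 ≤ MV H (g + t • v) e := MV_nonneg (H.e_nonempty e he) _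
        nlinarith [hub, hnn]
      have := Finset.sum_le_sum (fun e he => mul_le_mul_of_nonneg_left (hsum e he) (H.w_pos e he).le)
      calc (1/2) * ∑ e ∈ H.E, H.w e * (MV H (g + t • v) e)^2
          ≤ (1/2) * ∑ e ∈ H.E, H.w e * ((MV H g e)^2 + 2 * t * (MV H g e * Df e) + t^2 * (Df e)^2) := by linarith
        _ = (1/2) * ∑ e ∈ H.E, H.w e * (MV H g e)^2 + t * (∑ e ∈ H.E, H.w e * (MV H g e * Df e))
            + (t^2/2) * (∑ e ∈ H.E, H.w e * (Df e)^2) := by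
            rw [Finset.mul_sum, Finset.mul_sum, Finset.mul_sum, Finset.mul_sum,
              ← Finset.sum_add_distrib, ← Finset.sum_add_distrib]
            refine Finset.sum_congr rfl fun e he => ?_
            ring
    have hΦbound : Φ (g + t • v) ≤ Φ g + t * G + t^2 * C := by
      simp only [hΦ, hG, hC]
      have h1 := hq
      nlinarith [hFpart, hl, hq]
    have h0 := hmin (g + t • v)
    nlinarith [hΦbound, h0]
  have hneg : ∀ᶠ t in 𝓝[>] (0:ℝ), G + t * C < 0 := by
    have htend : Tendsto (fun t : ℝ => G + t * C) (𝓝[>] (0:ℝ)) (𝓝 (G + 0 * C)) :=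
      ((continuous_const.add (continuous_id.mul continuous_const)).tendsto 0).mono_left
        nhdsWithin_le_nhds
    rw [zero_mul, add_zero] at htend
    exact htend.eventually_lt_const hGneg
  obtain ⟨t, h1, h2, h3⟩ := (hexp.and (hneg.and self_mem_nhdsWithin)).exists
  have htpos : (0:ℝ) < t := h3
  nlinarith [h1, h2, htpos]

end Aux6
section Aux7
set_option linter.unusedSectionVars false

open Filter Topology

variable {H : Hypergraph V}

lemma resolvent_unique (hdeg : ∀ x, 0 < deg H x) {l : ℝ} (hl : 0 < l)
    {f g1 g2 h1 h2 : V → ℝ} (hm1 : h1 ∈ NL H g1) (hm2 : h2 ∈ NL H g2)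
    (he1 : f = g1 + l • h1) (he2 : f = g2 + l • h2) : g1 = g2 := by
  have hkey : g1 - g2 = l • (h2 - h1) := by
    have heq := he1.symm.trans he2
    funext z
    have := congrFun heq z
    simp only [Pi.add_apply, Pi.smul_apply, Pi.sub_apply, smul_eq_mul] at this ⊢
    linarith
  have hmono := NL_monotone hm1 hm2
  have hswap : h2 - h1 = (-1 : ℝ) • (h1 - h2) := by
    rw [neg_one_smul]; exact (neg_sub h1 h2).symm
  have hval : inn H (g1 - g2) (g1 - g2) = -l * inn H (h1 - h2) (g1 - g2) := by
    have h2' : inn H (g1 - g2) (g1 - g2) = inn H (l • ((-1:ℝ) • (h1 - h2))) (g1 - g2) := by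
      rw [← hswap, ← hkey]
    rw [h2', inn_smul_left, inn_smul_left]
    ring
  have h1' : inn H (g1 - g2) (g1 - g2) ≤ 0 := by
    rw [hval]
    nlinarith [hmono, hl]
  have := inn_self_eq_zero hdeg (le_antisymm h1' (inn_self_nonneg hdeg _))
  exact sub_eq_zero.1 this

lemma resolvent_spec (hdeg : ∀ x, 0 < deg H x) {l : ℝ} (hl : 0 < l) (f : V → ℝ) :
    ∃ h ∈ NL H (Resolvent H l f), f = Resolvent H l f + l • h :=
  Classical.epsilon_spec (resolvent_exists hdeg hl f)

lemma resolvent_eq (hdeg : ∀ x, 0 < deg H x) {l : ℝ} (hl : 0 < l)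
    {f g h : V → ℝ} (hm : h ∈ NL H g) (he : f = g + l • h) : Resolvent H l f = g := by
  obtain ⟨h', hm', he'⟩ := resolvent_spec hdeg hl f
  exact resolvent_unique hdeg hl hm' hm he' he

lemma resolvent_nonexpansive (hdeg : ∀ x, 0 < deg H x) {l : ℝ} (hl : 0 < l) (f1 f2 : V → ℝ) :
    nrm H (Resolvent H l f1 - Resolvent H l f2) ≤ nrm H (f1 - f2) := by
  obtain ⟨h1, hm1, he1⟩ := resolvent_spec hdeg hl f1
  obtain ⟨h2, hm2, he2⟩ := resolvent_spec hdeg hl f2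
  set g1 := Resolvent H l f1
  set g2 := Resolvent H l f2
  have hdiff : f1 - f2 = (g1 - g2) + l • (h1 - h2) := by
    funext z
    have e1 := congrFun he1 z
    have e2 := congrFun he2 z
    simp only [Pi.add_apply, Pi.smul_apply, Pi.sub_apply, smul_eq_mul] at e1 e2 ⊢
    linarith
  have hmono := NL_monotone hm1 hm2
  have hkey : inn H (g1 - g2) (g1 - g2) ≤ inn H (f1 - f2) (g1 - g2) := by
    rw [hdiff, inn_add_left, inn_smul_left]
    nlinarith [hmono, hl]
  have hcs : inn H (f1 - f2) (g1 - g2) ≤ nrm H (f1 - f2) * nrm H (g1 - g2) :=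
    inn_le_nrm_mul_nrm hdeg _ _
  by_cases hn : nrm H (g1 - g2) = 0
  · rw [hn]; exact nrm_nonneg _
  · have hpos : 0 < nrm H (g1 - g2) := lt_of_le_of_ne (nrm_nonneg _) (Ne.symm hn)
    have hsq : nrm H (g1 - g2) ^ 2 ≤ nrm H (f1 - f2) * nrm H (g1 - g2) := by
      rw [sq_nrm hdeg]; exact le_trans hkey hcs
    nlinarith [hsq, hpos]

lemma NL_scaled_deg (hdeg : ∀ x, 0 < deg H x) (c : ℝ) {h : V → ℝ}
    (hm : h ∈ NL H (c • (fun z => deg H z))) : h = 0 := by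
  obtain ⟨b, hb, rfl⟩ := hm
  have hDinv : Dinv H (c • (fun z => deg H z)) = fun _ => c := by
    funext z
    simp only [Dinv, Pi.smul_apply, smul_eq_mul]
    rw [mul_div_assoc, div_self (hdeg z).ne', mul_one]
  refine Finset.sum_eq_zero (fun e he => ?_)
  rw [hDinv, dot_const_of_mem_Bp (hb e he).1, mul_zero, zero_smul]

lemma resolvent_scaled_deg (hdeg : ∀ x, 0 < deg H x) {l : ℝ} (hl : 0 < l) (c : ℝ) :
    Resolvent H l (c • (fun z => deg H z)) = c • (fun z => deg H z) := by
  obtain ⟨h0, hm0⟩ := NL_nonempty (H := H) (c • (fun z => deg H z))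
  have h00 : h0 = 0 := NL_scaled_deg hdeg c hm0
  refine resolvent_eq hdeg hl hm0 ?_
  rw [h00, smul_zero, add_zero]

end Aux7
section Aux8
set_option linter.unusedSectionVars false
set_option maxHeartbeats 1000000

open Filter Topology

variable {H : Hypergraph V}

lemma A_mem_NL (hdeg : ∀ x, 0 < deg H x) {l : ℝ} (hl : 0 < l) (f : V → ℝ) :
    l⁻¹ • (f - Resolvent H l f) ∈ NL H (Resolvent H l f) := by
  obtain ⟨h, hm, he⟩ := resolvent_spec hdeg hl f
  have : l⁻¹ • (f - Resolvent H l f) = h := by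
    funext z
    have := congrFun he z
    simp only [Pi.add_apply, Pi.smul_apply, Pi.sub_apply, smul_eq_mul] at this ⊢
    field_simp
    linarith
  rw [this]; exact hm

lemma A_inn_le (hdeg : ∀ x, 0 < deg H x) {l : ℝ} (hl : 0 < l) (f : V → ℝ) :
    inn H (l⁻¹ • (f - Resolvent H l f)) (l⁻¹ • (f - Resolvent H l f))
      ≤ nrm H (L0 H f) ^ 2 := by
  set J := Resolvent H l f
  set A := l⁻¹ • (f - J) with hA
  have hANL : A ∈ NL H J := A_mem_NL hdeg hl f
  have hL0 : L0 H f ∈ NL H f := (L0_spec f).1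
  have hmono := NL_monotone hANL hL0
  -- J - f = -(l • A)
  have hJf : J - f = (-l) • A := by
    funext z
    simp only [hA, Pi.sub_apply, Pi.smul_apply, smul_eq_mul]
    field_simp
    ring
  have h1 : inn H (A - L0 H f) (J - f) = -l * inn H (A - L0 H f) A := by
    rw [hJf, inn_smul_right]
  have h2 : inn H (A - L0 H f) A ≤ 0 := by
    nlinarith [hmono, h1, hl]
  have h3 : inn H A A ≤ inn H (L0 H f) A := by
    have := inn_sub_left (H := H) A (L0 H f) A
    linarith [h2, this]
  have hcs : inn H (L0 H f) A ≤ nrm H (L0 H f) * nrm H A :=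
    inn_le_nrm_mul_nrm hdeg _ _
  by_cases hn : nrm H A = 0
  · have : inn H A A = 0 := by rw [← sq_nrm hdeg, hn]; ring
    rw [this]
    positivity
  · have hpos : 0 < nrm H A := lt_of_le_of_ne (nrm_nonneg _) (Ne.symm hn)
    have hsq : nrm H A ^ 2 ≤ nrm H (L0 H f) * nrm H A := by
      rw [sq_nrm hdeg]; exact le_trans h3 hcs
    have hle : nrm H A ≤ nrm H (L0 H f) := by nlinarith [hsq, hpos]
    rw [← sq_nrm hdeg]
    have := nrm_nonneg (H := H) A
    nlinarith [hle]

lemma coord_sq_le_inn (hdeg : ∀ x, 0 < deg H x) (u : V → ℝ) (z : V) :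
    (u z)^2 ≤ inn H u u * deg H z := by
  have hterm : u z * u z / deg H z ≤ inn H u u := by
    unfold inn
    exact Finset.single_le_sum (f := fun x => u x * u x / deg H x)
      (fun x _ => div_nonneg (mul_self_nonneg _) (hdeg x).le) (Finset.mem_univ z)
  have := (div_le_iff₀ (hdeg z)).1 hterm
  nlinarith [this]

theorem tendsto_A_L0 (hdeg : ∀ x, 0 < deg H x) (f : V → ℝ) :
    Tendsto (fun l : ℝ => l⁻¹ • (f - Resolvent H l f)) (𝓝[>] (0:ℝ)) (𝓝 (L0 H f)) := by
  classical
  set N := nrm H (L0 H f) with hN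
  set Cb : V → ℝ := fun z => Real.sqrt (N^2 * deg H z) with hCb
  have hCbnn : ∀ z, 0 ≤ Cb z := fun z => Real.sqrt_nonneg _
  -- coordinate bounds on A l
  have hAcoord : ∀ {l : ℝ}, 0 < l → ∀ z, |(l⁻¹ • (f - Resolvent H l f)) z| ≤ Cb z := by
    intro l hl z
    have h1 := A_inn_le hdeg hl f
    have h2 := coord_sq_le_inn hdeg (l⁻¹ • (f - Resolvent H l f)) z
    refine Real.abs_le_sqrt ?_
    calc ((l⁻¹ • (f - Resolvent H l f)) z)^2
        ≤ inn H (l⁻¹ • (f - Resolvent H l f)) (l⁻¹ • (f - Resolvent H l f)) * deg H z := h2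
      _ ≤ N^2 * deg H z := by
          have := mul_le_mul_of_nonneg_right h1 (hdeg z).le
          simpa [hN] using this
  set K₁ : Set (V → ℝ) := Set.pi Set.univ (fun z => Set.Icc (f z - Cb z) (f z + Cb z)) with hK₁
  set K₂ : Set (V → ℝ) := {h | inn H h h ≤ N^2} with hK₂
  set W : Set ((V → ℝ) × (Finset V → (V → ℝ))) :=
    {p | p.1 ∈ K₁ ∧ (∀ e ∈ H.E, p.2 e ∈ Bp e ∧
      ∀ b' ∈ Bp e, dot b' (Dinv H p.1) ≤ dot (p.2 e) (Dinv H p.1)) ∧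
      (∀ e ∉ H.E, p.2 e = 0)} with hW
  set Θ : ((V → ℝ) × (Finset V → (V → ℝ))) → ((V → ℝ) × (V → ℝ)) :=
    fun p => (p.1, ∑ e ∈ H.E, (H.w e * dot (p.2 e) (Dinv H p.1)) • p.2 e) with hΘ
  set GI : Set ((V → ℝ) × (V → ℝ)) := Θ '' W with hGI
  -- continuity helpers
  have hcont1 : ∀ v : V → ℝ, Continuous (fun p : (V → ℝ) × (Finset V → (V → ℝ)) =>
      dot v (Dinv H p.1)) := by
    intro v
    unfold dot Dinv
    exact continuous_finset_sum _ fun z _ =>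
      continuous_const.mul (((continuous_apply z).comp continuous_fst).div_const _)
  have hcont2 : ∀ e : Finset V, Continuous (fun p : (V → ℝ) × (Finset V → (V → ℝ)) =>
      dot (p.2 e) (Dinv H p.1)) := by
    intro e
    unfold dot Dinv
    refine continuous_finset_sum _ fun z _ => Continuous.mul ?_ ?_
    · exact (continuous_apply z).comp ((continuous_apply e).comp continuous_snd)
    · exact ((continuous_apply z).comp continuous_fst).div_const _
  have hK₁closed : IsClosed K₁ :=
    isClosed_set_pi fun z _ => isClosed_Icc
  have hK₁comp : IsCompact K₁ := isCompact_univ_pi fun z => isCompact_Icc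
  have hWclosed : IsClosed W := by
    have heq : W = (Prod.fst ⁻¹' K₁)
        ∩ ((⋂ e ∈ H.E, ({p : (V → ℝ) × (Finset V → (V → ℝ)) | p.2 e ∈ Bp e}
            ∩ ⋂ b' ∈ Bp e, {p | dot b' (Dinv H p.1) ≤ dot (p.2 e) (Dinv H p.1)}))
          ∩ (⋂ e, ⋂ (_ : e ∉ H.E), {p : (V → ℝ) × (Finset V → (V → ℝ)) | p.2 e = 0})) := by
      ext p
      simp only [hW, Set.mem_setOf_eq, Set.mem_inter_iff, Set.mem_preimage, Set.mem_iInter]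
    rw [heq]
    refine IsClosed.inter (hK₁closed.preimage continuous_fst) (IsClosed.inter ?_ ?_)
    · refine isClosed_biInter fun e he => IsClosed.inter ?_ ?_
      · exact (Bp_isClosed e).preimage ((continuous_apply e).comp continuous_snd)
      · exact isClosed_biInter fun b' hb' => isClosed_le (hcont1 b') (hcont2 e)
    · exact isClosed_iInter fun e => isClosed_iInter fun _ =>
        isClosed_eq ((continuous_apply e).comp continuous_snd) continuous_const
  have hWcomp : IsCompact W := by
    have hbig : IsCompact ((K₁ : Set (V → ℝ)) ×ˢ
        Set.pi Set.univ (fun e => if e ∈ H.E then Bp e else ({0} : Set (V → ℝ)))) := by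
      refine hK₁comp.prod (isCompact_univ_pi fun e => ?_)
      by_cases he : e ∈ H.E
      · simpa [he] using Bp_isCompact e
      · simpa [he] using isCompact_singleton (x := (0 : V → ℝ))
    refine hbig.of_isClosed_subset hWclosed ?_
    rintro p ⟨h1, h2, h3⟩
    refine Set.mem_prod.2 ⟨h1, fun e _ => ?_⟩
    by_cases he : e ∈ H.E
    · simpa [he] using (h2 e he).1
    · simpa [he] using h3 e he
  have hΘcont : Continuous Θ := by
    refine continuous_fst.prodMk (continuous_finset_sum _ fun e _ => Continuous.fun_smul ?_ ?_)
    · exact continuous_const.mul (hcont2 e)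
    · exact (continuous_apply e).comp continuous_snd
  have hGIcomp : IsCompact GI := hWcomp.image hΘcont
  -- membership transfer
  have hGI_of_NL : ∀ g h : V → ℝ, g ∈ K₁ → h ∈ NL H g → (g, h) ∈ GI := by
    intro g h hgK hm
    obtain ⟨b, hb, rfl⟩ := hm
    refine ⟨(g, fun e => if he : e ∈ H.E then b e else 0), ⟨hgK, ?_, ?_⟩, ?_⟩
    · intro e he
      simp only [dif_pos he]
      exact hb e he
    · intro e he
      simp only [dif_neg he]
    · simp only [hΘ]
      refine Prod.ext rfl ?_
      simp only
      refine Finset.sum_congr rfl fun e he => ?_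
      simp only [dif_pos he]
  have hNL_of_GI : ∀ g h : V → ℝ, (g, h) ∈ GI → h ∈ NL H g := by
    rintro g h ⟨p, ⟨hpK, hp2, hp3⟩, hpe⟩
    have h1 : p.1 = g := congrArg Prod.fst hpe
    have h2 : (∑ e ∈ H.E, (H.w e * dot (p.2 e) (Dinv H p.1)) • p.2 e) = h :=
      congrArg Prod.snd hpe
    subst h1
    exact ⟨p.2, hp2, h2.symm⟩
  -- min norm identification
  have hmin_id : ∀ h : V → ℝ, h ∈ NL H f → h ∈ K₂ → h = L0 H f := by
    intro h hm hK
    refine eq_L0_of_min hdeg hm ?_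
    have : nrm H h ≤ Real.sqrt (N^2) := by
      unfold nrm
      exact Real.sqrt_le_sqrt hK
    rwa [Real.sqrt_sq (by rw [hN]; exact nrm_nonneg _)] at this
  -- J tends to f
  set CM : ℝ := ∑ z, Cb z with hCM
  have hCMnn : 0 ≤ CM := Finset.sum_nonneg fun z _ => hCbnn z
  have hCb_le_CM : ∀ z, Cb z ≤ CM :=
    fun z => Finset.single_le_sum (fun x _ => hCbnn x) (Finset.mem_univ z)
  have hJcoord : ∀ {l : ℝ}, 0 < l → ∀ z, |Resolvent H l f z - f z| ≤ l * Cb z := by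
    intro l hl z
    have h1 := hAcoord hl z
    have h2 : Resolvent H l f z - f z = -(l * ((l⁻¹ • (f - Resolvent H l f)) z)) := by
      simp only [Pi.smul_apply, Pi.sub_apply, smul_eq_mul]
      field_simp
      ring
    rw [h2, abs_neg, abs_mul, abs_of_pos hl]
    exact mul_le_mul_of_nonneg_left h1 hl.le
  have hJtend : Tendsto (fun l => Resolvent H l f) (𝓝[>] (0:ℝ)) (𝓝 f) := by
    rw [tendsto_iff_dist_tendsto_zero]
    refine squeeze_zero' (g := fun l => l * CM)
      (Filter.Eventually.of_forall fun l => dist_nonneg) ?_ ?_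
    · filter_upwards [self_mem_nhdsWithin] with l hl
      have hl' : (0:ℝ) < l := hl
      rw [dist_pi_le_iff (mul_nonneg hl'.le hCMnn)]
      intro z
      rw [Real.dist_eq]
      exact le_trans (hJcoord hl' z)
        (mul_le_mul_of_nonneg_left (hCb_le_CM z) hl'.le)
    · have : Tendsto (fun l : ℝ => l * CM) (𝓝 (0:ℝ)) (𝓝 (0 * CM)) :=
        (continuous_id.mul continuous_const).tendsto 0
      rw [zero_mul] at this
      exact this.mono_left nhdsWithin_le_nhds
  -- main argument
  rw [(nhds_basis_opens (L0 H f)).tendsto_right_iff]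
  rintro U ⟨hLU, hUopen⟩
  set Z : Set ((V → ℝ) × (V → ℝ)) := GI ∩ (Prod.snd ⁻¹' (K₂ ∩ Uᶜ)) with hZ
  have hK₂closed : IsClosed K₂ := isClosed_le continuous_inn_self continuous_const
  have hZcomp : IsCompact Z :=
    hGIcomp.inter_right ((hK₂closed.inter hUopen.isClosed_compl).preimage continuous_snd)
  set P1 : Set (V → ℝ) := Prod.fst '' Z with hP1
  have hP1closed : IsClosed P1 := (hZcomp.image continuous_fst).isClosed
  have hfP1 : f ∉ P1 := by
    rintro ⟨⟨g, h⟩, ⟨hGImem, hsnd⟩, hfst⟩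
    simp only at hfst
    subst hfst
    have hhNL : h ∈ NL H g := hNL_of_GI g h hGImem
    have := hmin_id h hhNL hsnd.1
    exact hsnd.2 (this ▸ hLU)
  have hopen : IsOpen P1ᶜ := hP1closed.isOpen_compl
  have hev1 : ∀ᶠ l in 𝓝[>] (0:ℝ), Resolvent H l f ∈ P1ᶜ :=
    hJtend.eventually (hopen.mem_nhds hfP1)
  have hev2 : ∀ᶠ l in 𝓝[>] (0:ℝ), l < 1 :=
    Filter.Tendsto.eventually_lt_const (by norm_num : (0:ℝ) < 1)
      (tendsto_id.mono_left nhdsWithin_le_nhds)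
  filter_upwards [hev1, hev2, self_mem_nhdsWithin] with l hc hl1 hl0
  have hlpos : (0:ℝ) < l := hl0
  by_contra hAU
  have hJK1 : Resolvent H l f ∈ K₁ := by
    intro z _
    have h1 := hJcoord hlpos z
    have h2 : l * Cb z ≤ Cb z := by
      nlinarith [hCbnn z, hl1, hlpos]
    have := le_trans h1 h2
    rw [abs_le] at this
    exact ⟨by linarith [this.1], by linarith [this.2]⟩
  have hGImem : (Resolvent H l f, l⁻¹ • (f - Resolvent H l f)) ∈ GI :=
    hGI_of_NL _ _ hJK1 (A_mem_NL hdeg hlpos f)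
  have hZmem : (Resolvent H l f, l⁻¹ • (f - Resolvent H l f)) ∈ Z :=
    ⟨hGImem, ⟨A_inn_le hdeg hlpos f, hAU⟩⟩
  exact hc ⟨_, hZmem, rfl⟩

end Aux8
section Aux9
set_option linter.unusedSectionVars false
set_option maxHeartbeats 1000000

open Filter Topology

variable {H : Hypergraph V}

lemma inn_delta_sub (f : V → ℝ) (a b : V) :
    inn H f (delta a - delta b) = Dinv H f a - Dinv H f b := by
  rw [inn_symm, inn_eq_dot, dot_delta_sub]

lemma gdist_le_hdiam (z y : V) : gdist H z y ≤ hdiam H := by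
  unfold gdist hdiam
  exact_mod_cast Finset.le_sup (f := fun p : V × V => hdistN H p.1 p.2) (Finset.mem_univ (z, y))

lemma lip_bound {f' : V → ℝ} (hf : f' ∈ Lip1 H) (y z : V) :
    |Dinv H f' z - Dinv H f' y| ≤ hdiam H := by
  have h1 : inn H f' (delta z - delta y) ≤ gdist H z y := hf z y
  have h2 : inn H f' (delta y - delta z) ≤ gdist H y z := hf y z
  rw [inn_delta_sub] at h1 h2
  have h3 := le_trans h1 (gdist_le_hdiam z y)
  have h4 := le_trans h2 (gdist_le_hdiam y z)
  rw [abs_le]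
  constructor <;> linarith

lemma inn_sub_scaled_le (hdeg : ∀ x, 0 < deg H x) {f' : V → ℝ} (hf : f' ∈ Lip1 H) (y : V) :
    inn H (f' - (Dinv H f' y) • (fun z => deg H z)) (f' - (Dinv H f' y) • (fun z => deg H z))
      ≤ vol H * (hdiam H)^2 := by
  set c := Dinv H f' y with hc
  have hdiamnn : 0 ≤ hdiam H := by
    unfold hdiam; positivity
  unfold inn
  have hterm : ∀ z, (f' - c • (fun z => deg H z)) z * (f' - c • (fun z => deg H z)) z / deg H z
      = deg H z * (Dinv H f' z - c)^2 := by
    intro z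
    have h1 : (f' - c • (fun z => deg H z)) z = f' z - c * deg H z := rfl
    rw [h1]
    unfold Dinv
    have hd := (hdeg z).ne'
    field_simp
  calc ∑ z, (f' - c • (fun z => deg H z)) z * (f' - c • (fun z => deg H z)) z / deg H z
      = ∑ z, deg H z * (Dinv H f' z - c)^2 := Finset.sum_congr rfl fun z _ => hterm z
    _ ≤ ∑ z, deg H z * (hdiam H)^2 := by
        refine Finset.sum_le_sum fun z _ => mul_le_mul_of_nonneg_left ?_ (hdeg z).le
        have := lip_bound hf y z
        nlinarith [abs_le.1 this]
    _ = vol H * (hdiam H)^2 := by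
        rw [← Finset.sum_mul]; rfl

lemma KD_bddAbove (hdeg : ∀ x, 0 < deg H x) {l : ℝ} (hl : 0 < l) (x y : V) :
    BddAbove { r | ∃ f ∈ Lip1 H, r = inn H (Resolvent H l f) (delta x - delta y) } := by
  refine ⟨Real.sqrt (vol H * (hdiam H)^2) * nrm H (delta x - delta y), ?_⟩
  rintro r ⟨f', hf', rfl⟩
  set c := Dinv H f' y with hc
  set f₀ : V → ℝ := c • (fun z => deg H z) with hf₀
  have hJf₀ : Resolvent H l f₀ = f₀ := resolvent_scaled_deg hdeg hl c
  have hDinvf₀ : ∀ z, Dinv H f₀ z = c := by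
    intro z
    simp only [hf₀, Dinv, Pi.smul_apply, smul_eq_mul]
    rw [mul_div_assoc, div_self (hdeg z).ne', mul_one]
  have hzero : inn H (Resolvent H l f₀) (delta x - delta y) = 0 := by
    rw [hJf₀, inn_delta_sub, hDinvf₀ x, hDinvf₀ y, sub_self]
  have hsplit : inn H (Resolvent H l f') (delta x - delta y)
      = inn H (Resolvent H l f' - Resolvent H l f₀) (delta x - delta y)
        + inn H (Resolvent H l f₀) (delta x - delta y) := by
    rw [inn_sub_left]; ring
  have hcs : inn H (Resolvent H l f' - Resolvent H l f₀) (delta x - delta y)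
      ≤ nrm H (Resolvent H l f' - Resolvent H l f₀) * nrm H (delta x - delta y) :=
    inn_le_nrm_mul_nrm hdeg _ _
  have hne : nrm H (Resolvent H l f' - Resolvent H l f₀) ≤ nrm H (f' - f₀) :=
    resolvent_nonexpansive hdeg hl f' f₀
  have hnrm : nrm H (f' - f₀) ≤ Real.sqrt (vol H * (hdiam H)^2) := by
    unfold nrm
    exact Real.sqrt_le_sqrt (inn_sub_scaled_le hdeg hf' y)
  rw [hsplit, hzero, add_zero]
  calc inn H (Resolvent H l f' - Resolvent H l f₀) (delta x - delta y)
      ≤ nrm H (Resolvent H l f' - Resolvent H l f₀) * nrm H (delta x - delta y) := hcs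
    _ ≤ Real.sqrt (vol H * (hdiam H)^2) * nrm H (delta x - delta y) :=
        mul_le_mul_of_nonneg_right (le_trans hne hnrm) (nrm_nonneg _)

lemma one_le_gdist (hconn : Connected H) {x y : V} (hxy : x ≠ y) :
    (1:ℝ) ≤ gdist H x y := by
  have hne : {n | chainProp H x y n}.Nonempty := hconn x y
  have hmem := Nat.sInf_mem hne
  have h0 : hdistN H x y ≠ 0 := by
    intro h0
    unfold hdistN at h0
    rw [h0] at hmem
    obtain ⟨z, hz0, hzn, _⟩ := hmem
    exact hxy (hz0 ▸ hzn ▸ rfl)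
  unfold gdist
  exact_mod_cast Nat.one_le_iff_ne_zero.2 h0

end Aux9
/-- if `f` is weighted 1-Lipschitz with `⟨f, δ_x − δ_y⟩ = d(x,y)`,
then `κ̄(x,y) ≤ ⟨𝓛⁰f, δ_x − δ_y⟩ / d(x,y)`; in particular `κ̄(x,y) < ∞`. -/
theorem stmt12 [Nonempty V] (H : Hypergraph V) (hconn : Connected H)
    (hdeg : ∀ x : V, 0 < deg H x) (x y : V) (hxy : x ≠ y)
    (f : V → ℝ) (hf : f ∈ Lip1 H)
    (hpot : inn H f (delta x - delta y) = gdist H x y) :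
    kappaUpper H x y ≤ ((inn H (L0 H f) (delta x - delta y) / gdist H x y : ℝ) : EReal) ∧
    kappaUpper H x y < ⊤ := by
  classical
  have hd1 : (1:ℝ) ≤ gdist H x y := one_le_gdist hconn hxy
  have hdpos : (0:ℝ) < gdist H x y := lt_of_lt_of_le one_pos hd1
  set d : ℝ := gdist H x y with hd
  set dl : V → ℝ := delta x - delta y with hdl
  -- eventual inequality
  have hkey : ∀ᶠ l in nhdsWithin (0:ℝ) (Set.Ioi 0),
      kappa H l x y / l ≤ inn H (l⁻¹ • (f - Resolvent H l f)) dl / d := by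
    filter_upwards [self_mem_nhdsWithin] with l hl
    have hlpos : (0:ℝ) < l := hl
    have hKD : inn H (Resolvent H l f) dl ≤ KD H l x y :=
      le_csSup (KD_bddAbove hdeg hlpos x y) ⟨f, hf, rfl⟩
    have hkap : kappa H l x y ≤ inn H (f - Resolvent H l f) dl / d := by
      unfold kappa
      rw [inn_sub_left, hpot, ← hd, sub_div, div_self hdpos.ne']
      have : KD H l x y / d ≥ inn H (Resolvent H l f) dl / d := by gcongr
      linarith
    have h2 : kappa H l x y / l ≤ (inn H (f - Resolvent H l f) dl / d) / l := by gcongr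
    refine le_trans h2 (le_of_eq ?_)
    rw [inn_smul_left, div_div, inv_mul_eq_div, div_div, mul_comm d l]
  -- the limit of the right-hand side
  have htendA := tendsto_A_L0 hdeg f
  have htend : Filter.Tendsto (fun l => inn H (l⁻¹ • (f - Resolvent H l f)) dl / d)
      (nhdsWithin (0:ℝ) (Set.Ioi 0)) (nhds (inn H (L0 H f) dl / d)) := by
    have h1 : Filter.Tendsto (fun l => inn H (l⁻¹ • (f - Resolvent H l f)) dl)
        (nhdsWithin (0:ℝ) (Set.Ioi 0)) (nhds (inn H (L0 H f) dl)) :=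
      ((continuous_inn_left dl).tendsto _).comp htendA
    exact h1.div_const d
  have hlimsup_eq : Filter.limsup
      (fun l => ((inn H (l⁻¹ • (f - Resolvent H l f)) dl / d : ℝ) : EReal))
      (nhdsWithin (0:ℝ) (Set.Ioi 0)) = ((inn H (L0 H f) dl / d : ℝ) : EReal) :=
    Filter.Tendsto.limsup_eq (EReal.tendsto_coe.2 htend)
  have hle : kappaUpper H x y ≤ ((inn H (L0 H f) dl / d : ℝ) : EReal) := by
    unfold kappaUpper
    refine le_trans (Filter.limsup_le_limsup ?_) hlimsup_eq.le
    filter_upwards [hkey] with l h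
    exact EReal.coe_le_coe_iff.2 h
  exact ⟨hle, lt_of_le_of_lt hle (EReal.coe_lt_top _)⟩

end HypRicci
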